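/- arXiv:2401.03544 — 3 statements merged into one kernel-verified Lean document; each statement's English description precedes it below -/
import Mathlib

section
/- Let u : ℝ → ℝ be a G-Lipschitz function and N ⊂ ℝ a compact set with Lebesgue measure zero. Then the derivative of u vanishes at Lebesgue density points of u⁻¹(N): if t is a point of density 1 of u⁻¹(N) and u is differentiable at t, then u'(t) = 0. -/
open MeasureTheory Filter Set

theorem stmt_0 (u : ℝ → ℝ) (G : ℝ) (hG : 0 ≤ G)
    (hLip : LipschitzWith (Real.toNNReal G) u)
    (N : Set ℝ) (hN : IsCompact N) (hN0 : volume N = 0)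
    (t : ℝ)
    (hdens : Tendsto (fun ε : ℝ =>
        volume (u ⁻¹' N ∩ Icc (t - ε) (t + ε)) / ENNReal.ofReal (2 * ε))
      (nhdsWithin 0 (Ioi 0)) (nhds 1))
    (d : ℝ) (hderiv : HasDerivAt u d t) :
    d = 0 := by
  by_contra hd0
  set S := u ⁻¹' N with hS
  have hSm : MeasurableSet S := (hN.isClosed.preimage hLip.continuous).measurableSet
  set c := |d| with hc
  have hc0 : 0 < c := abs_pos.mpr hd0
  set δ : ℝ := c / (8 * (G + 1)) with hδ
  have hδ0 : 0 < δ := by positivity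
  -- derivative estimate
  have hslope : Tendsto (slope u t) (nhdsWithin t {t}ᶜ) (nhds d) :=
    hasDerivAt_iff_tendsto_slope.mp hderiv
  have hmap : Tendsto (fun ε : ℝ => t + ε) (nhdsWithin 0 (Ioi 0))
      (nhdsWithin t {t}ᶜ) := by
    apply tendsto_nhdsWithin_of_tendsto_nhds_of_eventually_within
    · have : Tendsto (fun ε : ℝ => t + ε) (nhds 0) (nhds t) := by
        simpa using (continuous_add_left t).tendsto (0 : ℝ)
      exact this.mono_left nhdsWithin_le_nhds
    · filter_upwards [self_mem_nhdsWithin] with ε (hε : 0 < ε)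
      simp [hε.ne']
  have hder2 : ∀ᶠ ε in nhdsWithin 0 (Ioi 0), c / 2 * ε ≤ |u (t + ε) - u t| := by
    have h1 : ∀ᶠ ε in nhdsWithin 0 (Ioi 0),
        dist (slope u t (t + ε)) d < c / 2 :=
      (hslope.comp hmap).eventually (Metric.ball_mem_nhds d (by positivity))
    filter_upwards [h1, self_mem_nhdsWithin] with ε h1 (hε : 0 < ε)
    have hs : slope u t (t + ε) = (u (t + ε) - u t) / ε := by
      rw [slope_def_field]; ring_nf
    rw [Real.dist_eq, hs] at h1
    have h2 : c - c / 2 ≤ |(u (t + ε) - u t) / ε| := by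
      have h3 := abs_sub_abs_le_abs_sub d ((u (t + ε) - u t) / ε)
      rw [abs_sub_comm] at h1
      linarith [h1.le, h3]
    rw [abs_div, abs_of_pos hε, le_div_iff₀ hε] at h2
    linarith
  -- density estimate
  have hlt1 : ENNReal.ofReal (1 - δ) < 1 := ENNReal.ofReal_lt_one.mpr (by linarith)
  have hdens2 : ∀ᶠ ε in nhdsWithin 0 (Ioi 0),
      ENNReal.ofReal (1 - δ) <
        volume (S ∩ Icc (t - ε) (t + ε)) / ENNReal.ofReal (2 * ε) :=
    hdens.eventually (eventually_gt_nhds hlt1)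
  -- pick a good ε
  obtain ⟨ε, hεpos, hd2, hm⟩ :
      ∃ ε : ℝ, 0 < ε ∧ c / 2 * ε ≤ |u (t + ε) - u t| ∧
        ENNReal.ofReal (1 - δ) <
          volume (S ∩ Icc (t - ε) (t + ε)) / ENNReal.ofReal (2 * ε) := by
    obtain ⟨ε, hε, h1, h2⟩ := (eventually_mem_nhdsWithin.and (hder2.and hdens2)).exists
    exact ⟨ε, hε, h1, h2⟩
  set I : Set ℝ := Icc (t - ε) (t + ε)
  have hIvol : volume I = ENNReal.ofReal (2 * ε) := by
    rw [Real.volume_Icc]; ring_nf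
  have h2ε : (0:ℝ) < 2 * ε := by linarith
  -- measure of the bad set
  have hm' : ENNReal.ofReal ((1 - δ) * (2 * ε)) < volume (S ∩ I) := by
    rw [ENNReal.ofReal_mul' h2ε.le]
    exact (ENNReal.lt_div_iff_mul_lt (Or.inl (ENNReal.ofReal_pos.mpr h2ε).ne')
      (Or.inl ENNReal.ofReal_ne_top)).mp hm
  have hB : volume (I \ S) ≤ ENNReal.ofReal (δ * (2 * ε)) := by
    have hadd : volume (I ∩ S) + volume (I \ S) = volume I :=
      measure_inter_add_diff I hSm
    have h1 : volume (I \ S) ≤ volume I - volume (I ∩ S) :=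
      ENNReal.le_sub_of_add_le_left
        (ne_top_of_le_ne_top (by rw [hIvol]; exact ENNReal.ofReal_ne_top)
          (measure_mono inter_subset_left)) hadd.le
    calc volume (I \ S) ≤ volume I - volume (I ∩ S) := h1
      _ ≤ ENNReal.ofReal (2 * ε) - ENNReal.ofReal ((1 - δ) * (2 * ε)) := by
          rw [hIvol]
          exact tsub_le_tsub_left (le_of_lt (by rwa [inter_comm])) _
      _ ≤ ENNReal.ofReal (δ * (2 * ε)) := by
          rcases le_or_gt 0 (1 - δ) with h | h
          · rw [← ENNReal.ofReal_sub _ (by nlinarith)]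
            exact ENNReal.ofReal_le_ofReal (by nlinarith)
          · exact tsub_le_self.trans (ENNReal.ofReal_le_ofReal (by nlinarith))
  -- the image argument
  set B : Set ℝ := Icc t (t + ε) \ S
  have hBI : B ⊆ I \ S := fun x hx =>
    ⟨⟨by linarith [hx.1.1], hx.1.2⟩, hx.2⟩
  have hIVT : uIcc (u t) (u (t + ε)) ⊆ u '' (Icc t (t + ε)) := by
    have : uIcc t (t + ε) = Icc t (t + ε) := uIcc_of_le (by linarith)
    have h := intermediate_value_uIcc (hLip.continuous.continuousOn
      (s := uIcc t (t + ε)))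
    rwa [this] at h
  have hsub : uIcc (u t) (u (t + ε)) \ N ⊆ u '' B := by
    rintro y ⟨hy, hyN⟩
    obtain ⟨s, hs, rfl⟩ := hIVT hy
    exact ⟨s, ⟨hs, fun hsS => hyN hsS⟩, rfl⟩
  -- measure comparison chain
  have himg : volume (u '' B) ≤ ENNReal.ofReal G * volume B := by
    have h := hLip.hausdorffMeasure_image_le zero_le_one B
    rw [MeasureTheory.hausdorffMeasure_real] at h
    simpa [ENNReal.rpow_one, ENNReal.ofReal] using h
  have hlow : ENNReal.ofReal (c / 2 * ε) ≤ volume (uIcc (u t) (u (t + ε)) \ N) := by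
    rw [measure_diff_null hN0, Set.uIcc, Real.volume_Icc]
    apply ENNReal.ofReal_le_ofReal
    rw [max_sub_min_eq_abs]
    exact hd2
  have hchain : ENNReal.ofReal (c / 2 * ε) ≤
      ENNReal.ofReal G * ENNReal.ofReal (δ * (2 * ε)) := by
    calc ENNReal.ofReal (c / 2 * ε) ≤ volume (uIcc (u t) (u (t + ε)) \ N) := hlow
      _ ≤ volume (u '' B) := measure_mono hsub
      _ ≤ ENNReal.ofReal G * volume B := himg
      _ ≤ ENNReal.ofReal G * volume (I \ S) :=
          mul_le_mul_right (measure_mono hBI) _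
      _ ≤ ENNReal.ofReal G * ENNReal.ofReal (δ * (2 * ε)) :=
          mul_le_mul_right hB _
  rw [← ENNReal.ofReal_mul hG] at hchain
  have hreal : c / 2 * ε ≤ G * (δ * (2 * ε)) :=
    (ENNReal.ofReal_le_ofReal_iff (by positivity)).mp hchain
  have h8 : δ * (8 * (G + 1)) = c := by
    rw [hδ]; field_simp
  have hkey : G * (δ * (2 * ε)) ≤ c / 4 * ε := by
    nlinarith [mul_nonneg (mul_nonneg hδ0.le hεpos.le) hG,
      mul_nonneg hδ0.le hεpos.le]
  nlinarith [mul_pos hc0 hεpos]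
end

section
/- Let u_i = -3·a_i/8 with a_i = 2^{-i-1}(1+2^{-i}), and let δ_i = (3/4)·2^{-2^{2(i+1)}}/(2^{3·2^{2i-1}} - 1). Then for every α > 0, the ratio |u_i|/δ_i^α tends to +∞ as i → ∞. Consequently a function attaining value u_i and value 0 at two points at distance at most δ_i cannot be α-Hölder continuous for any α > 0. -/
open Filter

private lemma two_rpow_tendsto : Tendsto (fun x : ℝ => (2:ℝ) ^ x) atTop atTop := by
  simp_rw [Real.rpow_def_of_pos (by norm_num : (0:ℝ) < 2)]
  exact Real.tendsto_exp_atTop.comp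
    (Tendsto.const_mul_atTop (Real.log_pos one_lt_two) tendsto_id)

theorem stmt_16 (a u δ : ℕ → ℝ)
    (ha : ∀ i : ℕ, a i = ((1:ℝ)/2) ^ (i + 1) * (1 + ((1:ℝ)/2) ^ i))
    (hu : ∀ i : ℕ, u i = -3 * a i / 8)
    (hδ : ∀ i : ℕ, δ i = (3/4) * ((1:ℝ)/2) ^ (2 ^ (2 * (i + 1))) /
      ((2:ℝ) ^ (3 * 2 ^ (2 * i - 1)) - 1)) :
    ∀ α : ℝ, 0 < α →
      Tendsto (fun i : ℕ => |u i| / (δ i) ^ α) atTop atTop ∧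
      ∀ C : ℝ, ¬ (∀ i : ℕ, 1 ≤ i → |u i| ≤ C * (δ i) ^ α) := by
  intro α hα
  -- basic positivity facts
  have hδpos : ∀ i, 0 < δ i := by
    intro i
    rw [hδ i]
    have h2 : (2:ℝ) ≤ (2:ℝ) ^ (3 * 2 ^ (2 * i - 1)) := by
      calc (2:ℝ) = 2 ^ 1 := (pow_one 2).symm
      _ ≤ (2:ℝ) ^ (3 * 2 ^ (2 * i - 1)) := by
        apply pow_le_pow_right₀ (by norm_num)
        have : 1 ≤ 2 ^ (2 * i - 1) := Nat.one_le_two_pow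
        omega
    have : (0:ℝ) < (2:ℝ) ^ (3 * 2 ^ (2 * i - 1)) - 1 := by linarith
    positivity
  have hδle : ∀ i, δ i ≤ ((1:ℝ)/2) ^ (2 ^ (2 * (i + 1))) := by
    intro i
    rw [hδ i]
    have h2 : (2:ℝ) ≤ (2:ℝ) ^ (3 * 2 ^ (2 * i - 1)) := by
      calc (2:ℝ) = 2 ^ 1 := (pow_one 2).symm
      _ ≤ (2:ℝ) ^ (3 * 2 ^ (2 * i - 1)) := by
        apply pow_le_pow_right₀ (by norm_num)
        have : 1 ≤ 2 ^ (2 * i - 1) := Nat.one_le_two_pow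
        omega
    have h1 : (1:ℝ) ≤ (2:ℝ) ^ (3 * 2 ^ (2 * i - 1)) - 1 := by linarith
    have hx : (0:ℝ) ≤ (3/4) * ((1:ℝ)/2) ^ (2 ^ (2 * (i + 1))) := by positivity
    calc (3/4) * ((1:ℝ)/2) ^ (2 ^ (2 * (i + 1))) / ((2:ℝ) ^ (3 * 2 ^ (2 * i - 1)) - 1)
        ≤ (3/4) * ((1:ℝ)/2) ^ (2 ^ (2 * (i + 1))) := div_le_self hx h1
      _ ≤ ((1:ℝ)/2) ^ (2 ^ (2 * (i + 1))) := by
          nlinarith [pow_pos (by norm_num : (0:ℝ) < 1/2) (2 ^ (2 * (i + 1)))]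
  have hule : ∀ i, (3/8) * ((1:ℝ)/2) ^ (i + 1) ≤ |u i| := by
    intro i
    have hapos : 0 < a i := by rw [ha i]; positivity
    rw [hu i, abs_of_nonpos (by nlinarith), ha i]
    have h1 : (1:ℝ) ≤ 1 + ((1:ℝ)/2) ^ i := le_add_of_nonneg_right (by positivity)
    nlinarith [pow_pos (by norm_num : (0:ℝ) < 1/2) (i + 1)]
  -- lower bound function
  set g : ℕ → ℝ := fun i => (3/8) * (2:ℝ) ^ (α * (2:ℝ) ^ (2 * (i + 1)) - (i + 1 : ℝ)) with hg
  have hglb : ∀ i, g i ≤ |u i| / δ i ^ α := by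
    intro i
    have hδa : δ i ^ α ≤ (((1:ℝ)/2) ^ (2 ^ (2 * (i + 1)))) ^ α :=
      Real.rpow_le_rpow (hδpos i).le (hδle i) hα.le
    have hδapos : 0 < δ i ^ α := Real.rpow_pos_of_pos (hδpos i) α
    have key : g i = (3/8) * ((1:ℝ)/2) ^ (i + 1) / (((1:ℝ)/2) ^ (2 ^ (2 * (i + 1)))) ^ α := by
      have e1 : (((1:ℝ)/2) ^ (2 ^ (2 * (i + 1)))) ^ α
          = (2:ℝ) ^ (-(α * (2:ℝ) ^ (2 * (i + 1)))) := by
        rw [← Real.rpow_natCast ((1:ℝ)/2) (2 ^ (2 * (i + 1))), ← Real.rpow_mul (by norm_num),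
          one_div, Real.inv_rpow (by norm_num), ← Real.rpow_neg (by norm_num)]
        push_cast
        ring_nf
      have e2 : ((1:ℝ)/2) ^ (i + 1) = (2:ℝ) ^ (-(i + 1 : ℝ)) := by
        rw [← Real.rpow_natCast ((1:ℝ)/2) (i + 1), one_div, Real.inv_rpow (by norm_num),
          ← Real.rpow_neg (by norm_num)]
        push_cast
        ring_nf
      have hgi : g i = (3:ℝ)/8 * (2:ℝ) ^ (α * (2:ℝ) ^ (2 * (i + 1)) - ((i:ℝ) + 1)) := rfl
      have e3 : (2:ℝ) ^ (α * (2:ℝ) ^ (2 * (i + 1)) - ((i:ℝ) + 1))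
          = (2:ℝ) ^ (-((i:ℝ) + 1)) / (2:ℝ) ^ (-(α * (2:ℝ) ^ (2 * (i + 1)))) := by
        rw [← Real.rpow_sub (by norm_num)]
        ring_nf
      rw [hgi, e3, e2, e1]
      ring
    rw [key]
    exact div_le_div₀ (abs_nonneg _) (hule i) hδapos hδa
  have hgt : Tendsto g atTop atTop := by
    have hexp : Tendsto (fun i : ℕ => α * (2:ℝ) ^ (2 * (i + 1)) - (i + 1 : ℝ)) atTop atTop := by
      apply tendsto_atTop_mono' atTop (f₁ := fun i : ℕ => (i : ℝ) + 1)
      · have h2i : Tendsto (fun i : ℕ => (2:ℝ) ^ i) atTop atTop :=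
          tendsto_pow_atTop_atTop_of_one_lt one_lt_two
        filter_upwards [h2i.eventually_ge_atTop (1 / (2 * α))] with i hi
        have hi2 : (i : ℝ) + 1 ≤ (2:ℝ) ^ i := by
          have := Nat.lt_two_pow_self (n := i)
          calc (i : ℝ) + 1 ≤ ((2 ^ i : ℕ) : ℝ) := by exact_mod_cast this
          _ = (2:ℝ) ^ i := by push_cast; ring
        have hpow : (2:ℝ) ^ (2 * (i + 1)) = 4 * ((2:ℝ) ^ i) ^ 2 := by
          rw [two_mul, pow_add, ← pow_mul]; ring_nf
        have hi3 : 1 / 2 ≤ α * (2:ℝ) ^ i := by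
          rw [div_le_iff₀ (by positivity : (0:ℝ) < 2 * α)] at hi
          linarith [hi]
        have hp : (0:ℝ) < (2:ℝ) ^ i := by positivity
        rw [hpow]
        have h4 : 2 * (2:ℝ) ^ i ≤ α * (4 * ((2:ℝ) ^ i) ^ 2) := by
          nlinarith [mul_le_mul_of_nonneg_right hi3 hp.le]
        linarith
      · exact tendsto_atTop_add_const_right atTop 1 tendsto_natCast_atTop_atTop
    have := two_rpow_tendsto.comp hexp
    exact Tendsto.const_mul_atTop (by norm_num : (0:ℝ) < 3/8) this
  have hmain : Tendsto (fun i : ℕ => |u i| / (δ i) ^ α) atTop atTop :=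
    tendsto_atTop_mono hglb hgt
  refine ⟨hmain, ?_⟩
  intro C hC
  obtain ⟨i₀, hi₀⟩ := (tendsto_atTop_atTop.mp hmain) (C + 1)
  set i := max i₀ 1 with hi
  have h1 : C + 1 ≤ |u i| / δ i ^ α := hi₀ i (le_max_left _ _)
  have h2 : |u i| ≤ C * δ i ^ α := hC i (le_max_right _ _)
  have hδapos : 0 < δ i ^ α := Real.rpow_pos_of_pos (hδpos i) α
  have h3 : (C + 1) * δ i ^ α ≤ |u i| := (le_div_iff₀ hδapos).mp h1
  nlinarith [hδapos]
end

section
/- Let F be a family of continuous functions γ : ℝ → ℝ which is totally ordered by pointwise comparison (for any γ₁, γ₂ ∈ F, either γ₁ ≤ γ₂ everywhere or γ₂ ≤ γ₁ everywhere). Fix a countable dense sequence (t_k) in ℝ. Then the map θ : F → (-2,2) defined by θ(γ) = ∑_{k=0}^∞ tanh(γ(t_k))/2^k is strictly order preserving: γ₁ < γ₂ pointwise somewhere (with γ₁ ≤ γ₂ everywhere) implies θ(γ₁) < θ(γ₂). -/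
lemma tanh_formula (x : ℝ) : Real.tanh x = 1 - 2 / (Real.exp (2*x) + 1) := by
  rw [Real.tanh_eq_sinh_div_cosh, Real.sinh_eq, Real.cosh_eq]
  have h2 : Real.exp (2*x) = Real.exp x * Real.exp x := by
    rw [← Real.exp_add]; ring_nf
  have h3 : Real.exp x > 0 := Real.exp_pos x
  have h4 : Real.exp (-x) > 0 := Real.exp_pos (-x)
  have h5 : Real.exp x * Real.exp (-x) = 1 := by rw [← Real.exp_add]; simp
  rw [h2]
  field_simp
  nlinarith [h5]

lemma tanh_strictMono : StrictMono Real.tanh := by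
  intro a b hab
  rw [tanh_formula, tanh_formula]
  have h1 : Real.exp (2*a) < Real.exp (2*b) := Real.exp_lt_exp.mpr (by linarith)
  have h2 : (0:ℝ) < Real.exp (2*a) + 1 := by positivity
  have h3 : (0:ℝ) < Real.exp (2*b) + 1 := by positivity
  have h4 : 2 / (Real.exp (2*b) + 1) < 2 / (Real.exp (2*a) + 1) :=
    div_lt_div_of_pos_left (by norm_num) h2 (by linarith)
  linarith

lemma tanh_abs_lt_one (x : ℝ) : |Real.tanh x| ≤ 1 := by
  rw [tanh_formula, abs_le]
  have h2 : (0:ℝ) < Real.exp (2*x) + 1 := by positivity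
  have h3 : 2 / (Real.exp (2*x) + 1) > 0 := by positivity
  have h4 : 2 / (Real.exp (2*x) + 1) ≤ 2 := by
    rw [div_le_iff₀ h2]; nlinarith [Real.exp_pos (2*x)]
  constructor <;> linarith

lemma summable_aux (f : ℝ → ℝ) (t : ℕ → ℝ) :
    Summable (fun k : ℕ => Real.tanh (f (t k)) / 2 ^ k) := by
  apply Summable.of_norm_bounded (g := fun k : ℕ => (1/2 : ℝ) ^ k)
    (summable_geometric_of_lt_one (by norm_num) (by norm_num))
  intro k
  rw [norm_div, norm_pow, Real.norm_eq_abs, Real.norm_eq_abs, div_pow]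
  rw [div_le_div_iff₀ (by positivity) (by positivity)]
  have := tanh_abs_lt_one (f (t k))
  have h2 : |(2:ℝ)| = 2 := by norm_num
  rw [h2, one_pow]
  simpa using mul_le_mul_of_nonneg_right this (by positivity : (0:ℝ) ≤ 2 ^ k)

theorem stmt_17 (F : Set (ℝ → ℝ))
    (hcont : ∀ γ ∈ F, Continuous γ)
    (htotal : ∀ γ₁ ∈ F, ∀ γ₂ ∈ F, (∀ t, γ₁ t ≤ γ₂ t) ∨ (∀ t, γ₂ t ≤ γ₁ t))
    (t : ℕ → ℝ) (hdense : DenseRange t) :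
    ∀ γ₁ ∈ F, ∀ γ₂ ∈ F, (∀ s, γ₁ s ≤ γ₂ s) → (∃ s, γ₁ s < γ₂ s) →
      (∑' k : ℕ, Real.tanh (γ₁ (t k)) / 2 ^ k) <
      (∑' k : ℕ, Real.tanh (γ₂ (t k)) / 2 ^ k) := by
  intro γ₁ h₁ γ₂ h₂ hle ⟨s, hs⟩
  have hopen : IsOpen {x : ℝ | γ₁ x < γ₂ x} :=
    isOpen_lt (hcont γ₁ h₁) (hcont γ₂ h₂)
  obtain ⟨k, hk⟩ : ∃ k, γ₁ (t k) < γ₂ (t k) := by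
    exact hdense.exists_mem_open hopen ⟨s, hs⟩
  refine Summable.tsum_lt_tsum (i := k) ?_ ?_ (summable_aux γ₁ t) (summable_aux γ₂ t)
  · intro j
    exact div_le_div_of_nonneg_right (tanh_strictMono.monotone (hle (t j))) (by positivity)
  · exact div_lt_div_of_pos_right (tanh_strictMono hk) (by positivity)
end
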